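/- arXiv:2002.08082 — 8 statements merged into one kernel-verified Lean document; each statement's English description precedes it below -/
import Mathlib

section
/- For every node u ∈ V, every ℓ ≥ 0 and every real εₕ > 0, the number of nodes w ∈ V with h ℓ u w ≥ εₕ is at most ⌊(√c)^ℓ / εₕ⌋. -/
theorem stmt_3 {V : Type*} [Fintype V] [DecidableEq V]
    (I : V → Finset V) (hI : ∀ v, (I v).Nonempty)
    (c : ℝ) (hc0 : 0 < c) (hc1 : c < 1)
    (h : ℕ → V → V → ℝ)
    (h0 : ∀ u w, h 0 u w = if w = u then 1 else 0)
    (hrec : ∀ ℓ u w, h (ℓ + 1) u w =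
      ∑ v ∈ Finset.univ.filter (fun v => w ∈ I v),
        (Real.sqrt c / (I v).card) * h ℓ u v)
    (u : V) (ℓ : ℕ) (εh : ℝ) (hεh : 0 < εh) :
    (Finset.univ.filter (fun w => εh ≤ h ℓ u w)).card ≤
      ⌊Real.sqrt c ^ ℓ / εh⌋₊ := by
  have hs : Real.sqrt c > 0 := Real.sqrt_pos.mpr hc0
  have hnn : ∀ ℓ w, 0 ≤ h ℓ u w := by
    intro ℓ
    induction ℓ with
    | zero => intro w; rw [h0]; positivity
    | succ n ih =>
      intro w
      rw [hrec]
      apply Finset.sum_nonneg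
      intro v hv
      have := ih v
      have : (0:ℝ) ≤ (I v).card := by positivity
      positivity
  have hsum : ∀ ℓ, ∑ w, h ℓ u w = Real.sqrt c ^ ℓ := by
    intro ℓ
    induction ℓ with
    | zero => simp [h0]
    | succ n ih =>
      have : ∑ w, h (n + 1) u w
          = ∑ v, Real.sqrt c * h n u v := by
        simp only [hrec]
        rw [Finset.sum_comm' (s := Finset.univ) (t := fun w => Finset.univ.filter (fun v => w ∈ I v))
          (t' := Finset.univ) (s' := fun v => Finset.univ.filter (fun w => w ∈ I v))]
        · apply Finset.sum_congr rfl
          intro v _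
          rw [Finset.sum_const]
          have hcard : (Finset.univ.filter (fun w => w ∈ I v)).card = (I v).card := by
            congr 1
            ext w; simp
          rw [hcard]
          have hne : ((I v).card : ℝ) ≠ 0 := by
            have := (hI v).card_pos
            positivity
          field_simp
          rw [nsmul_eq_mul]
          field_simp
        · intro x y
          simp [and_comm]
      rw [this, ← Finset.mul_sum, ih, pow_succ]
      ring
  have hcard : ((Finset.univ.filter (fun w => εh ≤ h ℓ u w)).card : ℝ) * εh
      ≤ Real.sqrt c ^ ℓ := by
    rw [← hsum ℓ]
    calc ((Finset.univ.filter (fun w => εh ≤ h ℓ u w)).card : ℝ) * εh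
        = ∑ _w ∈ Finset.univ.filter (fun w => εh ≤ h ℓ u w), εh := by
          rw [Finset.sum_const, nsmul_eq_mul]
      _ ≤ ∑ w ∈ Finset.univ.filter (fun w => εh ≤ h ℓ u w), h ℓ u w := by
          apply Finset.sum_le_sum
          intro w hw
          exact (Finset.mem_filter.mp hw).2
      _ ≤ ∑ w, h ℓ u w := by
          apply Finset.sum_le_sum_of_subset_of_nonneg (Finset.filter_subset _ _)
          intro w _ _
          exact hnn ℓ w
  apply Nat.le_floor
  rw [le_div_iff₀ hεh]
  exact hcard
end

section
/- For every node u ∈ V, every real εₕ > 0 and every natural number L ≥ 1, the total number of attention nodes counted over levels 1 through L satisfies ∑_{ℓ=1}^{L} |{w ∈ V : h ℓ u w ≥ εₕ}| ≤ ⌊√c / ((1 − √c) · εₕ)⌋. (This is the first part of Lemma 2: the number of attention nodes with respect to u is at most ⌊√c / ((1 − √c)·εₕ)⌋.) -/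
theorem stmt_4 {V : Type*} [Fintype V] [DecidableEq V]
    (I : V → Finset V) (hI : ∀ v, (I v).Nonempty)
    (c : ℝ) (hc0 : 0 < c) (hc1 : c < 1)
    (h : ℕ → V → V → ℝ)
    (h0 : ∀ u w, h 0 u w = if w = u then 1 else 0)
    (hrec : ∀ ℓ u w, h (ℓ + 1) u w =
      ∑ v ∈ Finset.univ.filter (fun v => w ∈ I v),
        (Real.sqrt c / (I v).card) * h ℓ u v)
    (u : V) (εh : ℝ) (hεh : 0 < εh) (L : ℕ) (hL : 1 ≤ L) :
    ∑ ℓ ∈ Finset.Icc 1 L, (Finset.univ.filter (fun w => εh ≤ h ℓ u w)).card ≤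
      ⌊Real.sqrt c / ((1 - Real.sqrt c) * εh)⌋₊ := by
  set s := Real.sqrt c with hs
  have hs0 : 0 < s := Real.sqrt_pos.mpr hc0
  have hs1 : s < 1 := by
    rw [hs, show (1:ℝ) = Real.sqrt 1 by simp]
    exact Real.sqrt_lt_sqrt hc0.le hc1
  have hcard : ∀ v, (0:ℝ) < (I v).card := fun v => by
    exact_mod_cast (hI v).card_pos
  -- nonnegativity
  have hnn : ∀ ℓ w, 0 ≤ h ℓ u w := by
    intro ℓ
    induction ℓ with
    | zero => intro w; rw [h0]; positivity
    | succ n ih =>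
      intro w
      rw [hrec]
      refine Finset.sum_nonneg fun v _ => ?_
      exact mul_nonneg (div_nonneg hs0.le (hcard v).le) (ih v)
  -- total mass
  have hmass : ∀ ℓ, ∑ w, h ℓ u w = s ^ ℓ := by
    intro ℓ
    induction ℓ with
    | zero => simp [h0]
    | succ n ih =>
      have : ∑ w, h (n+1) u w
          = ∑ v : V, ∑ w ∈ Finset.univ.filter (fun w => w ∈ I v),
              (s / (I v).card) * h n u v := by
        simp only [hrec, Finset.sum_filter]
        rw [Finset.sum_comm]
      rw [this]
      have h2 : ∀ v : V, ∑ w ∈ Finset.univ.filter (fun w => w ∈ I v),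
          (s / (I v).card) * h n u v = s * h n u v := by
        intro v
        rw [Finset.sum_const, Finset.filter_mem_eq_inter, Finset.univ_inter,
          nsmul_eq_mul]
        have := (hcard v).ne'
        field_simp
      simp only [h2]
      rw [← Finset.mul_sum, ih, pow_succ]
      ring
  -- per-level count bound
  have hcount : ∀ ℓ, ((Finset.univ.filter (fun w => εh ≤ h ℓ u w)).card : ℝ)
      ≤ s ^ ℓ / εh := by
    intro ℓ
    rw [le_div_iff₀ hεh]
    calc ((Finset.univ.filter (fun w => εh ≤ h ℓ u w)).card : ℝ) * εh
        ≤ ∑ w ∈ Finset.univ.filter (fun w => εh ≤ h ℓ u w), h ℓ u w := by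
          rw [← nsmul_eq_mul]
          exact Finset.card_nsmul_le_sum _ _ _ (fun w hw => (Finset.mem_filter.mp hw).2)
      _ ≤ ∑ w, h ℓ u w :=
          Finset.sum_le_sum_of_subset_of_nonneg (Finset.filter_subset _ _)
            (fun w _ _ => hnn ℓ w)
      _ = s ^ ℓ := hmass ℓ
  have h1s : 0 < 1 - s := by linarith
  -- geometric sum bound
  have hgeom : ∑ ℓ ∈ Finset.Icc 1 L, s ^ ℓ ≤ s / (1 - s) := by
    have : ∑ ℓ ∈ Finset.Icc 1 L, s ^ ℓ = s * ∑ ℓ ∈ Finset.range L, s ^ ℓ := by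
      rw [Finset.mul_sum]
      rw [show Finset.Icc 1 L = Finset.Ico 1 (L+1) by rfl]
      rw [Finset.sum_Ico_eq_sum_range]
      exact Finset.sum_congr rfl fun i _ => by rw [pow_add, pow_one]
    rw [this, div_eq_mul_inv]
    refine mul_le_mul_of_nonneg_left ?_ hs0.le
    rw [geom_sum_eq (ne_of_lt hs1) L]
    have hsL : 0 ≤ s ^ L := pow_nonneg hs0.le L
    have heq : (s ^ L - 1) / (s - 1) = (1 - s ^ L) / (1 - s) := by
      rw [div_eq_div_iff (by linarith) (by linarith)]; ring
    rw [heq, div_le_iff₀ h1s, inv_mul_cancel₀ h1s.ne']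
    linarith
  -- conclude
  rw [Nat.le_floor_iff (div_nonneg hs0.le (mul_nonneg h1s.le hεh.le))]
  push_cast
  calc (∑ ℓ ∈ Finset.Icc 1 L, ((Finset.univ.filter (fun w => εh ≤ h ℓ u w)).card : ℝ))
      ≤ ∑ ℓ ∈ Finset.Icc 1 L, s ^ ℓ / εh :=
        Finset.sum_le_sum fun ℓ _ => hcount ℓ
    _ = (∑ ℓ ∈ Finset.Icc 1 L, s ^ ℓ) / εh := by rw [Finset.sum_div]
    _ ≤ (s / (1 - s)) / εh := by
        gcongr
    _ = s / ((1 - s) * εh) := by rw [div_div]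
end

section
/- For every node u ∈ V, every real εₕ with 0 < εₕ < 1, and every level ℓ > ⌊log(1/εₕ) / log(1/√c)⌋, one has h ℓ u w < εₕ for every node w ∈ V. (This is the second part of Lemma 2: all attention nodes exist within L* = ⌊log_{1/√c}(1/εₕ)⌋ steps from u.) -/
theorem stmt_5 {V : Type*} [Fintype V] [DecidableEq V]
    (I : V → Finset V) (hI : ∀ v, (I v).Nonempty)
    (c : ℝ) (hc0 : 0 < c) (hc1 : c < 1)
    (h : ℕ → V → V → ℝ)
    (h0 : ∀ u w, h 0 u w = if w = u then 1 else 0)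
    (hrec : ∀ ℓ u w, h (ℓ + 1) u w =
      ∑ v ∈ Finset.univ.filter (fun v => w ∈ I v),
        (Real.sqrt c / (I v).card) * h ℓ u v)
    (u : V) (εh : ℝ) (hεh0 : 0 < εh) (hεh1 : εh < 1)
    (ℓ : ℕ) (hℓ : ⌊Real.log (1 / εh) / Real.log (1 / Real.sqrt c)⌋₊ < ℓ) :
    ∀ w : V, h ℓ u w < εh := by
  set s := Real.sqrt c with hs
  have hs0 : 0 < s := Real.sqrt_pos.mpr hc0
  have hs1 : s < 1 := by
    rw [hs, show (1:ℝ) = Real.sqrt 1 by simp]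
    exact Real.sqrt_lt_sqrt hc0.le hc1
  -- nonnegativity
  have hnn : ∀ ℓ w, 0 ≤ h ℓ u w := by
    intro ℓ
    induction ℓ with
    | zero => intro w; rw [h0]; split <;> norm_num
    | succ n ih =>
      intro w
      rw [hrec]
      apply Finset.sum_nonneg
      intro v _
      exact mul_nonneg (div_nonneg hs0.le (by positivity)) (ih v)
  -- total mass
  have hsum : ∀ ℓ, ∑ w, h ℓ u w = s ^ ℓ := by
    intro ℓ
    induction ℓ with
    | zero => simp [h0]
    | succ n ih =>
      have : ∑ w, h (n + 1) u w = ∑ v, (I v).card * ((s / (I v).card) * h n u v) := by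
        simp only [hrec, Finset.sum_filter]
        rw [Finset.sum_comm]
        apply Finset.sum_congr rfl
        intro v _
        rw [← Finset.sum_filter, Finset.sum_const, Finset.filter_mem_eq_inter,
          Finset.univ_inter, nsmul_eq_mul]
      rw [this]
      have : ∀ v : V, ((I v).card : ℝ) * ((s / (I v).card) * h n u v) = s * h n u v := by
        intro v
        have hcard : ((I v).card : ℝ) ≠ 0 := by
          exact_mod_cast Finset.card_ne_zero_of_mem (hI v).choose_spec
        field_simp
      simp only [this]
      rw [← Finset.mul_sum, ih, pow_succ]
      ring
  intro w
  have hb : h ℓ u w ≤ s ^ ℓ := by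
    rw [← hsum ℓ]
    exact Finset.single_le_sum (fun v _ => hnn ℓ v) (Finset.mem_univ w)
  refine hb.trans_lt ?_
  -- s ^ ℓ < εh
  have hx : Real.log (1 / εh) / Real.log (1 / s) < ℓ := by
    have h0x : 0 ≤ Real.log (1 / εh) / Real.log (1 / s) := by
      apply div_nonneg
      · exact Real.log_nonneg (by rw [le_div_iff₀ hεh0]; linarith)
      · exact Real.log_nonneg (by rw [le_div_iff₀ hs0]; linarith)
    exact (Nat.floor_lt h0x).mp hℓ
  have hlogs : 0 < Real.log (1 / s) := by
    apply Real.log_pos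
    rw [lt_div_iff₀ hs0]; linarith
  have : Real.log (1 / εh) < ℓ * Real.log (1 / s) := by
    rwa [div_lt_iff₀ hlogs] at hx
  rw [Real.log_div one_ne_zero hεh0.ne', Real.log_div one_ne_zero hs0.ne', Real.log_one] at this
  have hlog : ℓ * Real.log s < Real.log εh := by linarith [mul_comm (ℓ:ℝ) (-Real.log s)]
  have := Real.exp_lt_exp.mpr hlog
  rwa [Real.exp_log hεh0, ← Real.log_pow, Real.exp_log (by positivity)] at this
end

section
/- Let u, v ∈ V and let η : V → ℝ satisfy 0 ≤ η w ≤ 1 for all w ∈ V. Then the function ℓ ↦ ∑_{w ∈ V} h ℓ u w · η w · h ℓ v w is summable over ℓ ∈ ℕ, and ∑_{ℓ=0}^{∞} ∑_{w ∈ V} h ℓ u w · η w · h ℓ v w ≤ 1/(1 − √c). -/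
theorem stmt_7 {V : Type*} [Fintype V] [DecidableEq V]
    (I : V → Finset V) (hI : ∀ v, (I v).Nonempty)
    (c : ℝ) (hc0 : 0 < c) (hc1 : c < 1)
    (h : ℕ → V → V → ℝ)
    (h0 : ∀ u w, h 0 u w = if w = u then 1 else 0)
    (hrec : ∀ ℓ u w, h (ℓ + 1) u w =
      ∑ v ∈ Finset.univ.filter (fun v => w ∈ I v),
        (Real.sqrt c / (I v).card) * h ℓ u v)
    (u v : V) (η : V → ℝ) (hη : ∀ w, 0 ≤ η w ∧ η w ≤ 1) :
    Summable (fun ℓ : ℕ => ∑ w, h ℓ u w * η w * h ℓ v w) ∧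
    ∑' ℓ : ℕ, ∑ w, h ℓ u w * η w * h ℓ v w ≤ 1 / (1 - Real.sqrt c) := by
  have hs0 : 0 ≤ Real.sqrt c := Real.sqrt_nonneg c
  have hs1 : Real.sqrt c < 1 := by
    rw [show (1:ℝ) = Real.sqrt 1 by simp]
    exact Real.sqrt_lt_sqrt hc0.le hc1
  -- nonnegativity of h
  have hpos : ∀ ℓ (a w : V), 0 ≤ h ℓ a w := by
    intro ℓ
    induction ℓ with
    | zero => intro a w; rw [h0]; positivity
    | succ n ih =>
      intro a w
      rw [hrec]
      apply Finset.sum_nonneg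
      intro x _
      have := ih a x
      positivity
  -- total mass
  have hsum : ∀ ℓ (a : V), ∑ w, h ℓ a w = (Real.sqrt c) ^ ℓ := by
    intro ℓ
    induction ℓ with
    | zero => intro a; simp [h0]
    | succ n ih =>
      intro a
      have : ∑ w, h (n+1) a w
          = ∑ w : V, ∑ x : V, if w ∈ I x then (Real.sqrt c / (I x).card) * h n a x else 0 := by
        refine Finset.sum_congr rfl fun w _ => ?_
        rw [hrec, Finset.sum_filter]
      rw [this, Finset.sum_comm]
      have step : ∀ x : V, (∑ w : V, if w ∈ I x then (Real.sqrt c / (I x).card) * h n a x else 0)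
          = Real.sqrt c * h n a x := by
        intro x
        rw [Finset.sum_ite_mem, Finset.univ_inter, Finset.sum_const, nsmul_eq_mul]
        have hcard : ((I x).card : ℝ) ≠ 0 := by
          exact_mod_cast Finset.card_ne_zero_of_mem (hI x).choose_spec
        field_simp
      rw [Finset.sum_congr rfl fun x _ => step x, ← Finset.mul_sum, ih, pow_succ]
      ring
  -- pointwise bound
  have hle : ∀ ℓ (a w : V), h ℓ a w ≤ (Real.sqrt c) ^ ℓ := by
    intro ℓ a w
    calc h ℓ a w ≤ ∑ w', h ℓ a w' :=
          Finset.single_le_sum (fun i _ => hpos ℓ a i) (Finset.mem_univ w)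
      _ = (Real.sqrt c) ^ ℓ := hsum ℓ a
  set S : ℕ → ℝ := fun ℓ => ∑ w, h ℓ u w * η w * h ℓ v w with hS
  have hSnonneg : ∀ ℓ, 0 ≤ S ℓ := fun ℓ =>
    Finset.sum_nonneg fun w _ => mul_nonneg (mul_nonneg (hpos ℓ u w) (hη w).1) (hpos ℓ v w)
  have hSle : ∀ ℓ, S ℓ ≤ (Real.sqrt c) ^ ℓ := by
    intro ℓ
    calc S ℓ ≤ ∑ w, h ℓ u w := by
          refine Finset.sum_le_sum fun w _ => ?_
          have h1 : h ℓ u w * η w * h ℓ v w ≤ h ℓ u w * 1 * 1 := by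
            apply mul_le_mul
            · apply mul_le_mul_of_nonneg_left (hη w).2 (hpos ℓ u w)
            · exact le_trans (hle ℓ v w) (pow_le_one₀ hs0 hs1.le)
            · exact hpos ℓ v w
            · have := hpos ℓ u w; linarith
          simpa using h1
      _ = (Real.sqrt c) ^ ℓ := hsum ℓ u
  have hgeo : Summable (fun ℓ : ℕ => (Real.sqrt c) ^ ℓ) :=
    summable_geometric_of_lt_one hs0 hs1
  have hsummable : Summable S := hgeo.of_nonneg_of_le hSnonneg hSle
  refine ⟨hsummable, ?_⟩
  calc ∑' ℓ, S ℓ ≤ ∑' ℓ : ℕ, (Real.sqrt c) ^ ℓ := Summable.tsum_le_tsum hSle hsummable hgeo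
    _ = 1 / (1 - Real.sqrt c) := by
        rw [tsum_geometric_of_lt_one hs0 hs1, one_div]
end

section
/- Let u, v ∈ V, let η : V → ℝ satisfy 0 ≤ η w ≤ 1 for all w ∈ V, and let εₕ satisfy 0 < εₕ ≤ 1. Define s = ∑_{ℓ=0}^{∞} ∑_{w ∈ V} h ℓ u w · η w · h ℓ v w, and define s' = ∑_{ℓ=0}^{∞} ∑_{w ∈ V with h ℓ u w ≥ εₕ} h ℓ u w · η w · h ℓ v w (both series are summable over ℓ). Then s − √c·εₕ/(1 − √c) ≤ s' ≤ s. (This is Lemma 1: restricting the SLING decomposition of SimRank to attention nodes loses at most √c·εₕ/(1 − √c).) -/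
theorem stmt_8 {V : Type*} [Fintype V] [DecidableEq V]
    (I : V → Finset V) (hI : ∀ v, (I v).Nonempty)
    (c : ℝ) (hc0 : 0 < c) (hc1 : c < 1)
    (h : ℕ → V → V → ℝ)
    (h0 : ∀ u w, h 0 u w = if w = u then 1 else 0)
    (hrec : ∀ ℓ u w, h (ℓ + 1) u w =
      ∑ v ∈ Finset.univ.filter (fun v => w ∈ I v),
        (Real.sqrt c / (I v).card) * h ℓ u v)
    (u v : V) (η : V → ℝ) (hη : ∀ w, 0 ≤ η w ∧ η w ≤ 1)
    (εh : ℝ) (hεh0 : 0 < εh) (hεh1 : εh ≤ 1) :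
    Summable (fun ℓ : ℕ => ∑ w, h ℓ u w * η w * h ℓ v w) ∧
    Summable (fun ℓ : ℕ => ∑ w ∈ Finset.univ.filter (fun w => εh ≤ h ℓ u w),
        h ℓ u w * η w * h ℓ v w) ∧
    (∑' ℓ : ℕ, ∑ w, h ℓ u w * η w * h ℓ v w) -
        Real.sqrt c * εh / (1 - Real.sqrt c) ≤
      ∑' ℓ : ℕ, ∑ w ∈ Finset.univ.filter (fun w => εh ≤ h ℓ u w),
        h ℓ u w * η w * h ℓ v w ∧
    (∑' ℓ : ℕ, ∑ w ∈ Finset.univ.filter (fun w => εh ≤ h ℓ u w),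
        h ℓ u w * η w * h ℓ v w) ≤
      ∑' ℓ : ℕ, ∑ w, h ℓ u w * η w * h ℓ v w := by
  set sc := Real.sqrt c with hscdef
  have hsc0 : 0 ≤ sc := Real.sqrt_nonneg c
  have hsc0' : 0 < sc := Real.sqrt_pos.mpr hc0
  have hsc1 : sc < 1 := by
    rw [hscdef, show (1:ℝ) = Real.sqrt 1 by simp]
    exact Real.sqrt_lt_sqrt hc0.le hc1
  -- nonnegativity of h
  have hnn : ∀ ℓ u w, 0 ≤ h ℓ u w := by
    intro ℓ
    induction ℓ with
    | zero => intro u w; rw [h0]; positivity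
    | succ ℓ ih =>
      intro u w
      rw [hrec]
      refine Finset.sum_nonneg fun v' _ => ?_
      have := ih u v'
      positivity
  -- row sums
  have hsum : ∀ ℓ u, ∑ w, h ℓ u w = sc ^ ℓ := by
    intro ℓ
    induction ℓ with
    | zero => intro u; simp [h0]
    | succ ℓ ih =>
      intro u
      calc ∑ w, h (ℓ+1) u w
          = ∑ w : V, ∑ v', (if w ∈ I v' then sc / (I v').card * h ℓ u v' else 0) := by
            simp only [hrec, Finset.sum_filter]
        _ = ∑ v', ∑ w : V, (if w ∈ I v' then sc / (I v').card * h ℓ u v' else 0) :=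
            Finset.sum_comm
        _ = ∑ v', sc * h ℓ u v' := by
            refine Finset.sum_congr rfl fun v' _ => ?_
            rw [Finset.sum_ite_mem, Finset.univ_inter, Finset.sum_const, nsmul_eq_mul]
            have hcard : ((I v').card : ℝ) ≠ 0 :=
              Nat.cast_ne_zero.mpr (Finset.card_ne_zero.mpr (hI v'))
            field_simp
        _ = sc ^ (ℓ+1) := by rw [← Finset.mul_sum, ih]; ring
  have hle : ∀ ℓ u w, h ℓ u w ≤ sc ^ ℓ := by
    intro ℓ u w
    rw [← hsum ℓ u]
    exact Finset.single_le_sum (fun i _ => hnn ℓ u i) (Finset.mem_univ w)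
  -- term bounds
  have htermnn : ∀ ℓ w, 0 ≤ h ℓ u w * η w * h ℓ v w := by
    intro ℓ w
    have h1 := hnn ℓ u w
    have h2 := hnn ℓ v w
    have h3 := (hη w).1
    positivity
  have hfullnn : ∀ ℓ, 0 ≤ ∑ w, h ℓ u w * η w * h ℓ v w :=
    fun ℓ => Finset.sum_nonneg fun w _ => htermnn ℓ w
  have hfullle : ∀ ℓ, ∑ w, h ℓ u w * η w * h ℓ v w ≤ c ^ ℓ := by
    intro ℓ
    have : ∑ w, h ℓ u w * η w * h ℓ v w ≤ ∑ w, h ℓ u w * sc ^ ℓ := by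
      refine Finset.sum_le_sum fun w _ => ?_
      have h1 := hnn ℓ u w
      have h2 := hnn ℓ v w
      have h3 := (hη w).1
      have h4 := (hη w).2
      have h5 := hle ℓ v w
      have h6 : η w * h ℓ v w ≤ sc ^ ℓ := by nlinarith
      calc h ℓ u w * η w * h ℓ v w = h ℓ u w * (η w * h ℓ v w) := by ring
        _ ≤ h ℓ u w * sc ^ ℓ := mul_le_mul_of_nonneg_left h6 h1
    calc ∑ w, h ℓ u w * η w * h ℓ v w ≤ ∑ w, h ℓ u w * sc ^ ℓ := this
      _ = sc ^ ℓ * sc ^ ℓ := by rw [← Finset.sum_mul, hsum]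
      _ = c ^ ℓ := by rw [← mul_pow, hscdef, Real.mul_self_sqrt hc0.le]
  have hsummable_full : Summable (fun ℓ : ℕ => ∑ w, h ℓ u w * η w * h ℓ v w) := by
    refine Summable.of_nonneg_of_le hfullnn hfullle ?_
    exact summable_geometric_of_lt_one hc0.le hc1
  have hfilter_le : ∀ ℓ, ∑ w ∈ Finset.univ.filter (fun w => εh ≤ h ℓ u w),
      h ℓ u w * η w * h ℓ v w ≤ ∑ w, h ℓ u w * η w * h ℓ v w := by
    intro ℓ
    exact Finset.sum_le_sum_of_subset_of_nonneg (Finset.filter_subset _ _)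
      (fun w _ _ => htermnn ℓ w)
  have hfilternn : ∀ ℓ, 0 ≤ ∑ w ∈ Finset.univ.filter (fun w => εh ≤ h ℓ u w),
      h ℓ u w * η w * h ℓ v w :=
    fun ℓ => Finset.sum_nonneg fun w _ => htermnn ℓ w
  have hsummable_filter : Summable (fun ℓ : ℕ => ∑ w ∈ Finset.univ.filter
      (fun w => εh ≤ h ℓ u w), h ℓ u w * η w * h ℓ v w) := by
    refine Summable.of_nonneg_of_le hfilternn
      (fun ℓ => (hfilter_le ℓ).trans (hfullle ℓ)) ?_
    exact summable_geometric_of_lt_one hc0.le hc1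
  refine ⟨hsummable_full, hsummable_filter, ?_, ?_⟩
  · -- lower bound
    set d : ℕ → ℝ := fun ℓ => ∑ w ∈ Finset.univ.filter (fun w => ¬ (εh ≤ h ℓ u w)),
        h ℓ u w * η w * h ℓ v w with hd
    have hdeq : ∀ ℓ, (∑ w, h ℓ u w * η w * h ℓ v w) =
        (∑ w ∈ Finset.univ.filter (fun w => εh ≤ h ℓ u w),
          h ℓ u w * η w * h ℓ v w) + d ℓ := by
      intro ℓ
      rw [hd]
      exact (Finset.sum_filter_add_sum_filter_not _ _ _).symm
    have hd0 : d 0 = 0 := by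
      rw [hd]
      refine Finset.sum_eq_zero fun w hw => ?_
      simp only [Finset.mem_filter, not_le] at hw
      have hwu : w ≠ u := by
        intro hwu
        rw [hwu, h0] at hw
        simp at hw
        linarith
      rw [h0]
      simp [hwu]
    have hdle : ∀ ℓ, d ℓ ≤ εh * sc ^ ℓ := by
      intro ℓ
      have : d ℓ ≤ ∑ w, εh * h ℓ v w := by
        rw [hd]
        refine le_trans (Finset.sum_le_sum ?_) (Finset.sum_le_sum_of_subset_of_nonneg
          (Finset.filter_subset _ _) (fun w _ _ => by
            have := hnn ℓ v w; positivity))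
        intro w hw
        simp only [Finset.mem_filter, not_le] at hw
        have h1 := hnn ℓ u w
        have h2 := hnn ℓ v w
        have h3 := (hη w).1
        have h4 := (hη w).2
        have h5 : h ℓ u w * η w ≤ εh := by nlinarith [hw.2, mul_le_mul_of_nonneg_left h4 h1]
        exact mul_le_mul_of_nonneg_right h5 h2
      calc d ℓ ≤ ∑ w, εh * h ℓ v w := this
        _ = εh * sc ^ ℓ := by rw [← Finset.mul_sum, hsum]
    have hdnn : ∀ ℓ, 0 ≤ d ℓ := by
      intro ℓ; rw [hd]
      exact Finset.sum_nonneg fun w _ => htermnn ℓ w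
    have hdsummable : Summable d := by
      have : d = (fun ℓ => (∑ w, h ℓ u w * η w * h ℓ v w) -
          ∑ w ∈ Finset.univ.filter (fun w => εh ≤ h ℓ u w),
            h ℓ u w * η w * h ℓ v w) := by
        funext ℓ; rw [hdeq ℓ]; ring
      rw [this]
      exact hsummable_full.sub hsummable_filter
    have hgeo : Summable (fun ℓ : ℕ => sc ^ ℓ) :=
      summable_geometric_of_lt_one hsc0 hsc1
    have htsum_d : ∑' ℓ, d ℓ ≤ sc * εh / (1 - sc) := by
      rw [Summable.tsum_eq_zero_add hdsummable, hd0, zero_add]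
      have h1 : ∑' ℓ, d (ℓ + 1) ≤ ∑' ℓ : ℕ, εh * sc * sc ^ ℓ := by
        refine Summable.tsum_le_tsum (fun ℓ => ?_) (hdsummable.comp_injective
          (add_left_injective 1)) ((hgeo.mul_left _))
        calc d (ℓ + 1) ≤ εh * sc ^ (ℓ + 1) := hdle (ℓ + 1)
          _ = εh * sc * sc ^ ℓ := by ring
      rw [tsum_mul_left, tsum_geometric_of_lt_one hsc0 hsc1] at h1
      calc ∑' ℓ, d (ℓ + 1) ≤ εh * sc * (1 - sc)⁻¹ := h1
        _ = sc * εh / (1 - sc) := by ring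
    have heq : ∑' ℓ, (∑ w, h ℓ u w * η w * h ℓ v w) =
        (∑' ℓ, ∑ w ∈ Finset.univ.filter (fun w => εh ≤ h ℓ u w),
          h ℓ u w * η w * h ℓ v w) + ∑' ℓ, d ℓ := by
      rw [← Summable.tsum_add hsummable_filter hdsummable]
      exact tsum_congr hdeq
    linarith
  · -- upper bound
    exact Summable.tsum_le_tsum hfilter_le hsummable_filter hsummable_full
end

section
/- Let u, v ∈ V, let εₕ > 0, and let f : ℕ → V → ℝ satisfy 0 ≤ f ℓ w ≤ h ℓ u w · h ℓ v w for all ℓ ≥ 1 and w ∈ V. Then the function ℓ ↦ ∑_{w ∈ V with h ℓ u w < εₕ} f ℓ w is summable over ℓ ≥ 1, and ∑_{ℓ=1}^{∞} ∑_{w ∈ V with h ℓ u w < εₕ} f ℓ w ≤ √c·εₕ/(1 − √c). (This is the bound s₂(u,v) ≤ √c·εₕ/(1 − √c) used in the proof of Lemma 3, where f ℓ w is the probability that two √c-walks from u and v first meet at w at step ℓ, which is dominated by the meeting probability h ℓ u w · h ℓ v w.) -/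
theorem stmt_9 {V : Type*} [Fintype V] [DecidableEq V]
    (I : V → Finset V) (hI : ∀ v, (I v).Nonempty)
    (c : ℝ) (hc0 : 0 < c) (hc1 : c < 1)
    (h : ℕ → V → V → ℝ)
    (h0 : ∀ u w, h 0 u w = if w = u then 1 else 0)
    (hrec : ∀ ℓ u w, h (ℓ + 1) u w =
      ∑ v ∈ Finset.univ.filter (fun v => w ∈ I v),
        (Real.sqrt c / (I v).card) * h ℓ u v)
    (u v : V) (εh : ℝ) (hεh : 0 < εh)
    (f : ℕ → V → ℝ)
    (hf : ∀ ℓ, 1 ≤ ℓ → ∀ w, 0 ≤ f ℓ w ∧ f ℓ w ≤ h ℓ u w * h ℓ v w) :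
    Summable (fun ℓ : ℕ =>
      ∑ w ∈ Finset.univ.filter (fun w => h (ℓ + 1) u w < εh), f (ℓ + 1) w) ∧
    ∑' ℓ : ℕ, ∑ w ∈ Finset.univ.filter (fun w => h (ℓ + 1) u w < εh),
        f (ℓ + 1) w ≤ Real.sqrt c * εh / (1 - Real.sqrt c) := by
  set s := Real.sqrt c with hs
  have hs0 : 0 < s := Real.sqrt_pos.mpr hc0
  have hs1 : s < 1 := by
    rw [hs, show (1:ℝ) = Real.sqrt 1 by simp]
    exact Real.sqrt_lt_sqrt hc0.le hc1
  -- nonnegativity of h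
  have hnn : ∀ ℓ u' w, 0 ≤ h ℓ u' w := by
    intro ℓ
    induction ℓ with
    | zero =>
      intro u' w; rw [h0]; split <;> norm_num
    | succ n ih =>
      intro u' w
      rw [hrec]
      refine Finset.sum_nonneg fun x _ => mul_nonneg ?_ (ih u' x)
      exact div_nonneg (Real.sqrt_nonneg _) (by positivity)
  -- total mass
  have hsum : ∀ ℓ u', ∑ w, h ℓ u' w = s ^ ℓ := by
    intro ℓ
    induction ℓ with
    | zero => intro u'; simp [h0]
    | succ n ih =>
      intro u'
      have key : ∑ w, h (n+1) u' w
          = ∑ v', ∑ w ∈ Finset.univ.filter (fun w => w ∈ I v'),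
              (s / (I v').card) * h n u' v' := by
        simp_rw [hrec, Finset.sum_filter]
        exact Finset.sum_comm
      rw [key]
      have : ∀ v' : V, ∑ w ∈ Finset.univ.filter (fun w => w ∈ I v'),
          (s / (I v').card) * h n u' v' = s * h n u' v' := by
        intro v'
        rw [Finset.sum_const]
        have hfil : Finset.univ.filter (fun w => w ∈ I v') = I v' := by
          ext w; simp
        rw [hfil, nsmul_eq_mul]
        have hcard : ((I v').card : ℝ) ≠ 0 := by
          exact_mod_cast Finset.card_ne_zero_of_mem (hI v').choose_spec
        field_simp
      simp_rw [this]
      rw [← Finset.mul_sum, ih u', pow_succ]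
      ring
  -- termwise bound
  have hterm : ∀ ℓ : ℕ, ∑ w ∈ Finset.univ.filter (fun w => h (ℓ + 1) u w < εh),
      f (ℓ + 1) w ≤ εh * s ^ (ℓ + 1) := by
    intro ℓ
    have h1 : ∑ w ∈ Finset.univ.filter (fun w => h (ℓ + 1) u w < εh), f (ℓ + 1) w
        ≤ ∑ w ∈ Finset.univ.filter (fun w => h (ℓ + 1) u w < εh), εh * h (ℓ+1) v w := by
      refine Finset.sum_le_sum fun w hw => ?_
      have hwlt : h (ℓ + 1) u w < εh := (Finset.mem_filter.mp hw).2
      have := (hf (ℓ+1) (Nat.le_add_left 1 ℓ) w).2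
      calc f (ℓ+1) w ≤ h (ℓ+1) u w * h (ℓ+1) v w := this
        _ ≤ εh * h (ℓ+1) v w :=
          mul_le_mul_of_nonneg_right hwlt.le (hnn _ _ _)
    have h2 : ∑ w ∈ Finset.univ.filter (fun w => h (ℓ + 1) u w < εh), εh * h (ℓ+1) v w
        ≤ ∑ w, εh * h (ℓ+1) v w := by
      refine Finset.sum_le_sum_of_subset_of_nonneg (Finset.filter_subset _ _) ?_
      intro w _ _
      exact mul_nonneg hεh.le (hnn _ _ _)
    calc _ ≤ ∑ w, εh * h (ℓ+1) v w := h1.trans h2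
      _ = εh * s ^ (ℓ + 1) := by rw [← Finset.mul_sum, hsum]
  have hnonneg : ∀ ℓ : ℕ, 0 ≤ ∑ w ∈ Finset.univ.filter (fun w => h (ℓ + 1) u w < εh),
      f (ℓ + 1) w := fun ℓ =>
    Finset.sum_nonneg fun w _ => (hf (ℓ+1) (Nat.le_add_left 1 ℓ) w).1
  have hgeom : Summable (fun ℓ : ℕ => εh * s ^ (ℓ + 1)) := by
    have : Summable (fun ℓ : ℕ => s ^ ℓ) := summable_geometric_of_lt_one hs0.le hs1
    simpa [pow_succ, mul_comm, mul_left_comm, mul_assoc] using (this.mul_left (εh * s))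
  have hsummable : Summable (fun ℓ : ℕ =>
      ∑ w ∈ Finset.univ.filter (fun w => h (ℓ + 1) u w < εh), f (ℓ + 1) w) :=
    Summable.of_nonneg_of_le hnonneg hterm hgeom
  refine ⟨hsummable, ?_⟩
  have htle := Summable.tsum_le_tsum hterm hsummable hgeom
  have hval : ∑' ℓ : ℕ, εh * s ^ (ℓ + 1) = s * εh / (1 - s) := by
    have : (fun ℓ : ℕ => εh * s ^ (ℓ + 1)) = fun ℓ : ℕ => (εh * s) * s ^ ℓ := by
      funext ℓ; rw [pow_succ]; ring
    rw [this, tsum_mul_left, tsum_geometric_of_lt_one hs0.le hs1]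
    field_simp
  calc _ ≤ ∑' ℓ : ℕ, εh * s ^ (ℓ + 1) := htle
    _ = s * εh / (1 - s) := hval
end

section
/- Let r : V → ℝ and let ℓ ≥ 0. Define q : ℕ → V → ℝ by q ℓ = r and, for every k with 0 ≤ k < ℓ, q k v = (√c / |I(v)|) · ∑_{v' ∈ I(v)} q (k+1) v'. Then for every v ∈ V, q 0 v = ∑_{w ∈ V} r w · h ℓ v w. (This is the correctness identity of Reverse-Push without truncation: pushing the residues r of level-ℓ nodes down ℓ levels along out-edges computes, at each node v, the sum of r w weighted by the ℓ-step hitting probability from v to w.) -/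
theorem stmt_12 {V : Type*} [Fintype V] [DecidableEq V]
    (I : V → Finset V) (hI : ∀ v, (I v).Nonempty)
    (c : ℝ) (hc0 : 0 < c) (hc1 : c < 1)
    (h : ℕ → V → V → ℝ)
    (h0 : ∀ u w, h 0 u w = if w = u then 1 else 0)
    (hrec : ∀ ℓ u w, h (ℓ + 1) u w =
      ∑ v ∈ Finset.univ.filter (fun v => w ∈ I v),
        (Real.sqrt c / (I v).card) * h ℓ u v)
    (r : V → ℝ) (ℓ : ℕ) (q : ℕ → V → ℝ)
    (hqtop : q ℓ = r)
    (hqrec : ∀ k, k < ℓ → ∀ v, q k v =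
      (Real.sqrt c / (I v).card) * ∑ v' ∈ I v, q (k + 1) v') :
    ∀ v : V, q 0 v = ∑ w, r w * h ℓ v w := by
  -- first-step recursion for h, proved from the last-step recursion
  have alt : ∀ k u w, h (k + 1) u w =
      Real.sqrt c / (I u).card * ∑ v' ∈ I u, h k v' w := by
    intro k
    induction k with
    | zero =>
      intro u w
      rw [hrec]
      simp only [h0, mul_ite, mul_one, mul_zero]
      rw [Finset.sum_ite_eq' (Finset.univ.filter (fun v => w ∈ I v)) u
        (fun v => Real.sqrt c / (I v).card)]
      by_cases hw : w ∈ I u <;> simp [hw]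
    | succ k ih =>
      intro u w
      rw [hrec]
      have : ∀ v ∈ Finset.univ.filter (fun v => w ∈ I v),
          Real.sqrt c / (I v).card * h (k + 1) u v =
          Real.sqrt c / (I u).card *
            ∑ v' ∈ I u, Real.sqrt c / (I v).card * h k v' v := by
        intro v _
        rw [ih u v, Finset.mul_sum, Finset.mul_sum]
        rw [Finset.mul_sum]; exact Finset.sum_congr rfl fun v' _ => by ring
      rw [Finset.sum_congr rfl this, ← Finset.mul_sum, Finset.sum_comm]
      congr 1
      refine Finset.sum_congr rfl fun v' _ => ?_
      rw [hrec]
  -- main induction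
  have key : ∀ k, k ≤ ℓ → ∀ v, q (ℓ - k) v = ∑ w, r w * h k v w := by
    intro k
    induction k with
    | zero =>
      intro _ v
      simp only [Nat.sub_zero, hqtop, h0, mul_ite, mul_one, mul_zero]
      rw [Finset.sum_ite_eq' Finset.univ v r]
      simp
    | succ k ih =>
      intro hk v
      have hlt : ℓ - (k + 1) < ℓ := by omega
      rw [hqrec _ hlt v]
      have hsub : ℓ - (k + 1) + 1 = ℓ - k := by omega
      rw [hsub]
      have : ∑ v' ∈ I v, q (ℓ - k) v' =
          ∑ v' ∈ I v, ∑ w, r w * h k v' w :=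
        Finset.sum_congr rfl fun v' _ => ih (by omega) v'
      rw [this, Finset.sum_comm, Finset.mul_sum]
      refine Finset.sum_congr rfl fun w _ => ?_
      rw [alt k v w, Finset.mul_sum, Finset.mul_sum]
      ring_nf
      rw [Finset.mul_sum]; exact Finset.sum_congr rfl fun v' _ => by ring
  intro v
  have := key ℓ le_rfl v
  simpa using this
end

section
/- Let A be a finite set with a level function lv : A → ℕ, let p : A → ℝ, and let g : A → A → ℝ. Suppose ρ : A → A → ℝ and f̂ : A → ℝ satisfy, for all a, b ∈ A with lv a < lv b, the recursion ρ a b = g a b − ∑_{m ∈ A with lv a < lv m < lv b} ρ a m · g m b, and for all b ∈ A the recursion f̂ b = p b − ∑_{a ∈ A with lv a < lv b} f̂ a · g a b. Then ∑_{b ∈ A} f̂ b = ∑_{a ∈ A} p a · ( 1 − ∑_{b ∈ A with lv a < lv b} ρ a b ). (This is the algebraic identity ŝ₁(u,v) = s⁺(u,v) underlying the proof of Lemma 3: summing the first-meeting quantities f̂ defined by the restricted recursion over attention nodes equals weighting the meeting masses p by the last-meeting corrections 1 − ∑ ρ.) -/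
theorem stmt_15 {A : Type*} [Fintype A] [DecidableEq A]
    (lv : A → ℕ) (p : A → ℝ) (g : A → A → ℝ)
    (ρ : A → A → ℝ) (fhat : A → ℝ)
    (hρ : ∀ a b, lv a < lv b → ρ a b =
      g a b - ∑ m ∈ Finset.univ.filter (fun m => lv a < lv m ∧ lv m < lv b),
        ρ a m * g m b)
    (hf : ∀ b, fhat b =
      p b - ∑ a ∈ Finset.univ.filter (fun a => lv a < lv b), fhat a * g a b) :
    ∑ b, fhat b =
      ∑ a, p a * (1 - ∑ b ∈ Finset.univ.filter (fun b => lv a < lv b), ρ a b) := by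
  classical
  have key : ∀ n : ℕ, ∀ b, lv b = n →
      fhat b = p b - ∑ a ∈ Finset.univ.filter (fun a => lv a < lv b), p a * ρ a b := by
    intro n
    induction n using Nat.strong_induction_on with
    | _ n ih =>
      intro b hb
      rw [hf b]
      congr 1
      have step : ∀ a ∈ Finset.univ.filter (fun a => lv a < lv b),
          fhat a * g a b =
          (p a - ∑ c ∈ Finset.univ.filter (fun c => lv c < lv a), p c * ρ c a) * g a b := by
        intro a ha
        simp only [Finset.mem_filter] at ha
        rw [ih (lv a) (hb ▸ ha.2) a rfl]
      rw [Finset.sum_congr rfl step]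
      have expand : ∀ a : A,
          (p a - ∑ c ∈ Finset.univ.filter (fun c => lv c < lv a), p c * ρ c a) * g a b =
          p a * g a b - ∑ c ∈ Finset.univ.filter (fun c => lv c < lv a),
            p c * ρ c a * g a b := by
        intro a
        rw [sub_mul, Finset.sum_mul]
      simp only [expand]
      rw [Finset.sum_sub_distrib]
      -- swap the double sum
      have swap : ∑ a ∈ Finset.univ.filter (fun a => lv a < lv b),
            ∑ c ∈ Finset.univ.filter (fun c => lv c < lv a), p c * ρ c a * g a b
          = ∑ c ∈ Finset.univ.filter (fun c => lv c < lv b),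
            p c * ∑ m ∈ Finset.univ.filter (fun m => lv c < lv m ∧ lv m < lv b),
              ρ c m * g m b := by
        have hpush : ∀ (P : Prop) [Decidable P] (f : A → ℝ),
            (if P then ∑ x, f x else 0) = ∑ x, if P then f x else 0 := by
          intro P _ f; split <;> simp
        simp only [Finset.mul_sum, Finset.sum_filter, hpush, mul_ite, mul_zero]
        rw [Finset.sum_comm]
        apply Finset.sum_congr rfl
        intro c _
        apply Finset.sum_congr rfl
        intro a _
        by_cases h1 : lv a < lv b <;> by_cases h2 : lv c < lv a <;>
          simp [h1, h2] <;> first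
            | (intro h3 h4; omega)
            | (rw [if_pos (Nat.lt_trans h2 h1)]; ring)
            | omega
      rw [swap]
      have inner : ∀ c ∈ Finset.univ.filter (fun c => lv c < lv b),
          p c * ∑ m ∈ Finset.univ.filter (fun m => lv c < lv m ∧ lv m < lv b),
            ρ c m * g m b = p c * (g c b - ρ c b) := by
        intro c hc
        simp only [Finset.mem_filter] at hc
        have := hρ c b hc.2
        congr 1
        linarith
      rw [Finset.sum_congr rfl inner]
      have : ∀ c : A, p c * (g c b - ρ c b) = p c * g c b - p c * ρ c b := fun c => by ring
      simp only [this]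
      rw [Finset.sum_sub_distrib]
      ring
  -- now the main identity
  have hform : ∀ b : A, fhat b = p b - ∑ a ∈ Finset.univ.filter (fun a => lv a < lv b),
      p a * ρ a b := fun b => key (lv b) b rfl
  calc ∑ b, fhat b
      = ∑ b, (p b - ∑ a ∈ Finset.univ.filter (fun a => lv a < lv b), p a * ρ a b) := by
        exact Finset.sum_congr rfl fun b _ => hform b
    _ = ∑ b, p b - ∑ b, ∑ a ∈ Finset.univ.filter (fun a => lv a < lv b), p a * ρ a b := by
        rw [Finset.sum_sub_distrib]
    _ = ∑ a, p a - ∑ a, p a * ∑ b ∈ Finset.univ.filter (fun b => lv a < lv b), ρ a b := by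
        congr 1
        simp only [Finset.mul_sum, Finset.sum_filter, mul_ite, mul_zero]
        rw [Finset.sum_comm]
    _ = ∑ a, p a * (1 - ∑ b ∈ Finset.univ.filter (fun b => lv a < lv b), ρ a b) := by
        rw [← Finset.sum_sub_distrib]
        apply Finset.sum_congr rfl
        intro a _
        ring
end
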